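/- Let f : [1,∞) → (0,∞) be continuous, strictly decreasing, with f(x) → 0 as x → ∞, and let σ, δ ∈ (0,1) be constants. Then there exist continuous, strictly increasing functions U, V : [0,1]² → [0,∞), each Lipschitz in its first variable (there is a constant K with |U(r,s) − U(r',s)| ≤ K·|r − r'| and |V(r,s) − V(r',s)| ≤ K·|r − r'| for all arguments), at least one of which is not Lipschitz in its second variable (for no constant K' does |U(r,s) − U(r,s')| ≤ K'·|s − s'| hold for all arguments, or similarly for V), and there exists N, such that for all n ≥ N: with probability at least 1 − δ, for every bijection μ from men to women there is some rank i such that either r^M_{m_i} ≥ σ and man m_i's utility for μ(m_i) is less than U(r^W_{w_i}, 1) − f(n), or r^W_{w_i} ≥ σ and woman w_i's utility for μ⁻¹(w_i) is less than V(r^M_{m_i}, 1) − f(n). -/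

import Mathlib

open MeasureTheory

noncomputable section

/-- The uniform probability measure on `[0,1]`. -/
def unif : Measure ℝ := volume.restrict (Set.Icc (0:ℝ) 1)

/-- The joint law of a random one-to-one matching market of size `n`. -/
def marketMeasure (n : ℕ) :
    Measure ((Fin n → ℝ) × (Fin n → ℝ) × (Fin n → Fin n → ℝ) × (Fin n → Fin n → ℝ)) :=
  (Measure.pi fun _ => unif).prod
    ((Measure.pi fun _ => unif).prod
      ((Measure.pi fun _ => Measure.pi fun _ => unif).prod
        (Measure.pi fun _ => Measure.pi fun _ => unif)))

/-- 0-indexed rank: the number of agents with strictly larger rating. -/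
def rankOf {n : ℕ} (r : Fin n → ℝ) (a : Fin n) : ℕ :=
  (Finset.univ.filter fun b => r a < r b).card

/-- A continuous, strictly increasing, nonnegative utility function on `[0,1]²`. -/
structure ContIncr (f : ℝ → ℝ → ℝ) : Prop where
  cont : ContinuousOn (fun q : ℝ × ℝ => f q.1 q.2) (Set.Icc 0 1 ×ˢ Set.Icc 0 1)
  monoX : ∀ y ∈ Set.Icc (0:ℝ) 1, StrictMonoOn (fun x => f x y) (Set.Icc 0 1)
  monoY : ∀ x ∈ Set.Icc (0:ℝ) 1, StrictMonoOn (fun y => f x y) (Set.Icc 0 1)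
  nonneg : ∀ x ∈ Set.Icc (0:ℝ) 1, ∀ y ∈ Set.Icc (0:ℝ) 1, 0 ≤ f x y

/-- `f` is Lipschitz in its first variable on `[0,1]²` with constant `K`. -/
def LipFirst (f : ℝ → ℝ → ℝ) (K : ℝ) : Prop :=
  ∀ r ∈ Set.Icc (0:ℝ) 1, ∀ r' ∈ Set.Icc (0:ℝ) 1, ∀ s ∈ Set.Icc (0:ℝ) 1,
    |f r s - f r' s| ≤ K * |r - r'|

/-- `f` is Lipschitz in its second variable on `[0,1]²` with constant `K`. -/
def LipSecond (f : ℝ → ℝ → ℝ) (K : ℝ) : Prop :=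
  ∀ r ∈ Set.Icc (0:ℝ) 1, ∀ s ∈ Set.Icc (0:ℝ) 1, ∀ s' ∈ Set.Icc (0:ℝ) 1,
    |f r s - f r s'| ≤ K * |s - s'|

/-! ### Auxiliary lemmas -/

instance : IsProbabilityMeasure unif :=
  ⟨by rw [unif, Measure.restrict_apply_univ, Real.volume_Icc]; norm_num⟩

lemma unif_apply (s : Set ℝ) (hs : MeasurableSet s) : unif s = volume (s ∩ Set.Icc 0 1) :=
  Measure.restrict_apply hs

lemma pi_eval_measure {ι : Type*} [Fintype ι] [DecidableEq ι] {X : Type*} [MeasurableSpace X]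
    (μ : Measure X) [IsProbabilityMeasure μ] (i : ι) (A : Set X) :
    Measure.pi (fun _ : ι => μ) {g | g i ∈ A} = μ A := by
  have h1 : {g : ι → X | g i ∈ A} = Set.univ.pi (fun j => if j = i then A else Set.univ) := by
    ext g
    simp only [Set.mem_setOf_eq, Set.mem_pi, Set.mem_univ, forall_true_left]
    constructor
    · intro h j; split_ifs with h'
      · subst h'; exact h
      · trivial
    · intro h; have := h i; simpa using this
  rw [h1, Measure.pi_pi]
  have h2 : ∀ j : ι, μ (if j = i then A else Set.univ) = if j = i then μ A else 1 := by
    intro j; split_ifs <;> simp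
  rw [Finset.prod_congr rfl (fun j _ => h2 j), Finset.prod_ite_eq' Finset.univ i (fun _ => μ A)]
  simp

/-- The modulus function built from `f`. -/
def om (f : ℝ → ℝ) (u : ℝ) : ℝ := if u ≤ 0 then 0 else 2 * f (u ^ (-(3:ℝ)⁻¹))

/-- The private-score utility built from `f`. -/
def gg (f : ℝ → ℝ) (y : ℝ) : ℝ := om f 1 + 1 - om f (1 - y) - Real.sqrt (1 - y)

variable {f : ℝ → ℝ}

lemma om_arg_ge (u : ℝ) (h0 : 0 < u) (h1 : u ≤ 1) : 1 ≤ u ^ (-(3:ℝ)⁻¹) :=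
  Real.one_le_rpow_of_pos_of_le_one_of_nonpos h0 h1 (by norm_num)

lemma om_nonneg (hf_pos : ∀ x, 1 ≤ x → 0 < f x) (u : ℝ) (h1 : u ≤ 1) : 0 ≤ om f u := by
  rw [om]; split_ifs with h
  · exact le_refl 0
  · push_neg at h
    have := hf_pos _ (om_arg_ge u h h1)
    linarith

lemma om_zero : om f 0 = 0 := by simp [om]

lemma om_mono (hf_anti : StrictAntiOn f (Set.Ici 1)) (u v : ℝ)
    (hu : 0 < u) (huv : u ≤ v) (hv : v ≤ 1) : om f u ≤ om f v := by
  rw [om, om, if_neg (not_le.2 hu), if_neg (not_le.2 (lt_of_lt_of_le hu huv))]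
  have h1 : (1:ℝ) ≤ v ^ (-(3:ℝ)⁻¹) := om_arg_ge v (lt_of_lt_of_le hu huv) hv
  have h2 : v ^ (-(3:ℝ)⁻¹) ≤ u ^ (-(3:ℝ)⁻¹) :=
    Real.rpow_le_rpow_of_nonpos hu huv (by norm_num)
  have := hf_anti.antitoneOn (Set.mem_Ici.2 h1) (Set.mem_Ici.2 (le_trans h1 h2)) h2
  linarith

lemma om_eval (n : ℕ) (hn : 1 ≤ n) : om f (((n:ℝ)^3)⁻¹) = 2 * f n := by
  have hn1 : (1:ℝ) ≤ (n:ℝ) := by exact_mod_cast hn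
  have hnp : (0:ℝ) < (n:ℝ)^3 := by positivity
  rw [om, if_neg (not_le.2 (by positivity))]
  congr 1
  have h3 : ((n:ℝ)^3)⁻¹ = (n:ℝ) ^ (-(3:ℝ)) := by
    rw [← Real.rpow_natCast (n:ℝ) 3, ← Real.rpow_neg (by positivity)]
    norm_num
  rw [h3, ← Real.rpow_mul (by positivity)]
  norm_num

lemma om_cont (hf_pos : ∀ x, 1 ≤ x → 0 < f x)
    (hf_cont : ContinuousOn f (Set.Ici 1))
    (hf_lim : Filter.Tendsto f Filter.atTop (nhds 0)) :
    ContinuousOn (om f) (Set.Icc 0 1) := by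
  intro x hx
  rcases eq_or_lt_of_le hx.1 with h0 | hxpos
  · -- x = 0 : use the limit of f at infinity
    rw [← h0]
    rw [ContinuousWithinAt, Metric.tendsto_nhdsWithin_nhds]
    intro ε hε
    obtain ⟨M, hM⟩ := (Metric.tendsto_atTop.1 hf_lim) (ε/2) (half_pos hε)
    set M' : ℝ := max M 1 with hM'def
    have hM'1 : (1:ℝ) ≤ M' := le_max_right _ _
    have hM'0 : (0:ℝ) < M' := lt_of_lt_of_le one_pos hM'1
    refine ⟨M' ^ (-(3:ℝ)), Real.rpow_pos_of_pos hM'0 _, ?_⟩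
    intro u hu hdist
    have hom0 : om f 0 = 0 := by simp [om]
    rw [Real.dist_eq, hom0, sub_zero]
    rw [Real.dist_eq, sub_zero] at hdist
    rcases le_or_gt u 0 with h | h
    · rw [om, if_pos h]; simpa using hε
    · rw [om, if_neg (not_le.2 h)]
      have habs : u < M' ^ (-(3:ℝ)) := lt_of_abs_lt hdist
      have h1 : (M' ^ (-(3:ℝ))) ^ (-(3:ℝ)⁻¹) ≤ u ^ (-(3:ℝ)⁻¹) :=
        Real.rpow_le_rpow_of_nonpos h habs.le (by norm_num)
      have h2 : (M' ^ (-(3:ℝ))) ^ (-(3:ℝ)⁻¹) = M' := by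
        rw [← Real.rpow_mul hM'0.le]; norm_num
      have hargM : M' ≤ u ^ (-(3:ℝ)⁻¹) := h2 ▸ h1
      have harg1 : (1:ℝ) ≤ u ^ (-(3:ℝ)⁻¹) := le_trans hM'1 hargM
      have hfval := hM _ (le_trans (le_max_left M 1) hargM)
      rw [Real.dist_eq, sub_zero] at hfval
      have hfp := hf_pos _ harg1
      rw [abs_of_pos (by positivity)]
      rw [abs_of_pos hfp] at hfval
      linarith
  · -- 0 < x : locally om f = 2 * f (· ^ (-1/3))
    have hx1 : x ≤ 1 := hx.2
    have key : ContinuousWithinAt (fun u => 2 * f (u ^ (-(3:ℝ)⁻¹)))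
        (Set.Icc 0 1 ∩ Set.Ioi 0) x := by
      have hrpow : ContinuousWithinAt (fun u : ℝ => u ^ (-(3:ℝ)⁻¹))
          (Set.Icc 0 1 ∩ Set.Ioi 0) x :=
        (Real.continuousAt_rpow_const x _ (Or.inl (ne_of_gt hxpos))).continuousWithinAt
      have hmaps : Set.MapsTo (fun u : ℝ => u ^ (-(3:ℝ)⁻¹))
          (Set.Icc 0 1 ∩ Set.Ioi 0) (Set.Ici 1) := by
        intro u hu
        exact Set.mem_Ici.2 (om_arg_ge u hu.2 hu.1.2)
      have hcomp : ContinuousWithinAt (fun u : ℝ => f (u ^ (-(3:ℝ)⁻¹)))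
          (Set.Icc 0 1 ∩ Set.Ioi 0) x :=
        ContinuousWithinAt.comp (hf_cont _ (hmaps ⟨hx, hxpos⟩)) hrpow hmaps
      exact hcomp.const_mul 2
    have key2 : ContinuousWithinAt (om f) (Set.Icc 0 1 ∩ Set.Ioi 0) x := by
      refine key.congr (fun y hy => ?_) ?_
      · rw [om, if_neg (not_le.2 hy.2)]
      · rw [om, if_neg (not_le.2 hxpos)]
    exact (continuousWithinAt_inter (Ioi_mem_nhds hxpos)).1 key2

lemma gg_one : gg f 1 = om f 1 + 1 := by
  simp [gg, om_zero]

lemma gg_sub (u : ℝ) : gg f 1 - gg f (1 - u) = om f u + Real.sqrt u := by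
  rw [gg_one, gg]
  have h : 1 - (1 - u) = u := by ring
  rw [h]; ring

lemma gg_mono (hf_pos : ∀ x, 1 ≤ x → 0 < f x) (hf_anti : StrictAntiOn f (Set.Ici 1)) :
    StrictMonoOn (gg f) (Set.Icc 0 1) := by
  intro a ha b hb hab
  have h1 : Real.sqrt (1 - b) < Real.sqrt (1 - a) :=
    Real.sqrt_lt_sqrt (by linarith [hb.2]) (by linarith)
  have h2 : om f (1 - b) ≤ om f (1 - a) := by
    rcases le_or_gt (1 - b) 0 with h | h
    · rw [om, if_pos h]
      exact om_nonneg hf_pos _ (by linarith [ha.1])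
    · exact om_mono hf_anti _ _ h (by linarith) (by linarith [ha.1])
  rw [gg, gg]; linarith

lemma gg_nonneg (hf_pos : ∀ x, 1 ≤ x → 0 < f x) (hf_anti : StrictAntiOn f (Set.Ici 1))
    (y : ℝ) (hy : y ∈ Set.Icc (0:ℝ) 1) : 0 ≤ gg f y := by
  have h1 : Real.sqrt (1 - y) ≤ 1 := Real.sqrt_le_one.2 (by linarith [hy.1])
  have h2 : om f (1 - y) ≤ om f 1 := by
    rcases le_or_gt (1 - y) 0 with h | h
    · rw [om, if_pos h]
      exact om_nonneg hf_pos _ le_rfl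
    · exact om_mono hf_anti _ _ h (by linarith [hy.1]) le_rfl
  rw [gg]; linarith

lemma gg_cont (hf_pos : ∀ x, 1 ≤ x → 0 < f x)
    (hf_cont : ContinuousOn f (Set.Ici 1))
    (hf_lim : Filter.Tendsto f Filter.atTop (nhds 0)) :
    ContinuousOn (gg f) (Set.Icc 0 1) := by
  have hmaps : Set.MapsTo (fun y : ℝ => 1 - y) (Set.Icc 0 1) (Set.Icc 0 1) := by
    intro y hy
    simp only [Set.mem_Icc] at hy ⊢
    constructor <;> linarith
  have h1 : ContinuousOn (fun y : ℝ => om f (1 - y)) (Set.Icc 0 1) :=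
    (om_cont hf_pos hf_cont hf_lim).comp ((continuous_const.sub continuous_id).continuousOn) hmaps
  have h2 : ContinuousOn (fun y : ℝ => Real.sqrt (1 - y)) (Set.Icc 0 1) :=
    (Real.continuous_sqrt.comp (continuous_const.sub continuous_id)).continuousOn
  exact (continuousOn_const.sub h1).sub h2

theorem stmt17 (f : ℝ → ℝ) (hf_pos : ∀ x, 1 ≤ x → 0 < f x)
    (hf_cont : ContinuousOn f (Set.Ici 1)) (hf_anti : StrictAntiOn f (Set.Ici 1))
    (hf_lim : Filter.Tendsto f Filter.atTop (nhds 0))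
    (σ δ : ℝ) (hσ : σ ∈ Set.Ioo (0:ℝ) 1) (hδ : δ ∈ Set.Ioo (0:ℝ) 1) :
    ∃ U V : ℝ → ℝ → ℝ, ContIncr U ∧ ContIncr V ∧
      (∃ K : ℝ, LipFirst U K ∧ LipFirst V K) ∧
      ((¬ ∃ K' : ℝ, LipSecond U K') ∨ (¬ ∃ K' : ℝ, LipSecond V K')) ∧
      ∃ N : ℕ, ∀ n : ℕ, N ≤ n →
        ENNReal.ofReal (1 - δ) ≤
        marketMeasure n {ω | ∀ mtc : Fin n ≃ Fin n,
          ∃ a b : Fin n, rankOf ω.1 a = rankOf ω.2.1 b ∧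
            ((σ ≤ ω.1 a ∧
                U (ω.2.1 (mtc a)) (ω.2.2.1 a (mtc a)) < U (ω.2.1 b) 1 - f n) ∨
             (σ ≤ ω.2.1 b ∧
                V (ω.1 (mtc.symm b)) (ω.2.2.2 b (mtc.symm b)) < V (ω.1 a) 1 - f n))} := by
  obtain ⟨hσ0, hσ1⟩ := hσ
  obtain ⟨hδ0, hδ1⟩ := hδ
  obtain ⟨N₁, hN₁⟩ := exists_pow_lt_of_lt_one (half_pos hδ0) hσ1
  refine ⟨fun x y => x + y, fun x y => x + gg f y, ?_, ?_, ⟨1, ?_, ?_⟩, Or.inr ?_,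
    max (max N₁ ⌈(2/δ)⌉₊) 1, ?_⟩
  · -- ContIncr U
    constructor
    · exact (continuous_fst.add continuous_snd).continuousOn
    · intro y _ a _ b _ hab; simpa using hab
    · intro x _ a _ b _ hab; simpa using hab
    · intro x hx y hy; exact add_nonneg hx.1 hy.1
  · -- ContIncr V
    constructor
    · exact continuous_fst.continuousOn.add
        ((gg_cont hf_pos hf_cont hf_lim).comp continuous_snd.continuousOn (fun q hq => hq.2))
    · intro y _ a _ b _ hab; simpa using hab
    · intro x _ a ha b hb hab
      have := gg_mono hf_pos hf_anti ha hb hab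
      simpa using this
    · intro x hx y hy; exact add_nonneg hx.1 (gg_nonneg hf_pos hf_anti y hy)
  · -- LipFirst U 1
    intro r _ r' _ s _
    have h : r + s - (r' + s) = r - r' := by ring
    rw [h, one_mul]
  · -- LipFirst V 1
    intro r _ r' _ s _
    have h : r + gg f s - (r' + gg f s) = r - r' := by ring
    rw [h, one_mul]
  · -- V is not Lipschitz in its second variable
    rintro ⟨K', hK⟩
    set B : ℝ := max K' 1 with hBdef
    have hB1 : (1:ℝ) ≤ B := le_max_right _ _
    have hB0 : (0:ℝ) < B := by linarith
    set u : ℝ := ((2*B)⁻¹)^2 with hu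
    have hupos : 0 < u := by positivity
    have hule : u ≤ 1 := by
      have h2B : (2:ℝ) ≤ 2*B := by linarith
      have hi : (2*B)⁻¹ ≤ (2:ℝ)⁻¹ := inv_anti₀ (by norm_num) h2B
      have := pow_le_pow_left₀ (by positivity : (0:ℝ) ≤ (2*B)⁻¹) hi 2
      rw [hu]
      nlinarith
    have hsq : Real.sqrt u = (2*B)⁻¹ := Real.sqrt_sq (by positivity)
    have happ := hK 0 ⟨le_rfl, zero_le_one⟩ 1 ⟨zero_le_one, le_rfl⟩ (1-u)
      ⟨by linarith, by linarith⟩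
    simp only [zero_add] at happ
    have h1 : |gg f 1 - gg f (1-u)| = om f u + Real.sqrt u := by
      rw [gg_sub u, abs_of_nonneg]
      exact add_nonneg (om_nonneg hf_pos u hule) (Real.sqrt_nonneg u)
    have h2 : |1 - (1-u)| = u := by
      have h : 1 - (1-u) = u := by ring
      rw [h, abs_of_pos hupos]
    rw [h1, h2] at happ
    have hom := om_nonneg hf_pos u hule
    have hKB : K' * u ≤ B * u := mul_le_mul_of_nonneg_right (le_max_left _ _) hupos.le
    have hcalc : B * u = (2*B)⁻¹ / 2 := by
      rw [hu]; field_simp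
    have hp : 0 < (2*B)⁻¹ := by positivity
    rw [hsq] at happ
    linarith
  · -- The probabilistic statement
    intro n hn
    have hn1 : 1 ≤ n := le_trans (le_max_right _ _) hn
    have hnR : (1:ℝ) ≤ (n:ℝ) := by exact_mod_cast hn1
    have hnR0 : (0:ℝ) < (n:ℝ) := by linarith
    set t : ℝ := 1 - ((n:ℝ)^3)⁻¹ with ht
    have hinv1 : ((n:ℝ)^3)⁻¹ ≤ 1 := by
      have h13 : (1:ℝ) ≤ (n:ℝ)^3 := one_le_pow₀ hnR
      have := inv_anti₀ one_pos h13
      simpa using this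
    have hinv0 : (0:ℝ) < ((n:ℝ)^3)⁻¹ := by positivity
    have htnonneg : 0 ≤ t := by rw [ht]; linarith
    have htle1 : t ≤ 1 := by rw [ht]; linarith
    set G : Set ((Fin n → ℝ) × (Fin n → ℝ) × (Fin n → Fin n → ℝ) × (Fin n → Fin n → ℝ)) :=
      {ω | (∃ b, σ ≤ ω.2.1 b) ∧ ∀ b m, ω.2.2.2 b m ∈ Set.Icc 0 t} with hG
    -- Step A: G is contained in the target event
    have hsub : G ⊆ {ω | ∀ mtc : Fin n ≃ Fin n,
        ∃ a b : Fin n, rankOf ω.1 a = rankOf ω.2.1 b ∧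
          ((σ ≤ ω.1 a ∧
              (fun x y => x + y) (ω.2.1 (mtc a)) (ω.2.2.1 a (mtc a)) <
                (fun x y => x + y) (ω.2.1 b) 1 - f n) ∨
           (σ ≤ ω.2.1 b ∧
              (fun x y => x + gg f y) (ω.1 (mtc.symm b)) (ω.2.2.2 b (mtc.symm b)) <
                (fun x y => x + gg f y) (ω.1 a) 1 - f n))} := by
      intro ω hω
      haveI : Nonempty (Fin n) := ⟨⟨0, hn1⟩⟩
      obtain ⟨a, hamax⟩ := Finite.exists_max ω.1
      obtain ⟨b, hbmax⟩ := Finite.exists_max ω.2.1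
      intro mtc
      refine ⟨a, b, ?_, Or.inr ⟨?_, ?_⟩⟩
      · have hra : rankOf ω.1 a = 0 := by
          rw [rankOf, Finset.card_eq_zero, Finset.filter_eq_empty_iff]
          intro x _; exact not_lt.2 (hamax x)
        have hrb : rankOf ω.2.1 b = 0 := by
          rw [rankOf, Finset.card_eq_zero, Finset.filter_eq_empty_iff]
          intro x _; exact not_lt.2 (hbmax x)
        rw [hra, hrb]
      · obtain ⟨b₀, hb₀⟩ := hω.1
        exact le_trans hb₀ (hbmax b₀)
      · show ω.1 (mtc.symm b) + gg f (ω.2.2.2 b (mtc.symm b)) < ω.1 a + gg f 1 - f ↑n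
        set s := ω.2.2.2 b (mtc.symm b) with hs_def
        have hs := hω.2 b (mtc.symm b)
        have hs0 : 0 ≤ s := hs.1
        have hst : s ≤ t := hs.2
        have hs1 : ((n:ℝ)^3)⁻¹ ≤ 1 - s := by rw [ht] at hst; linarith
        have hsle : 1 - s ≤ 1 := by linarith
        have h2f : om f (((n:ℝ)^3)⁻¹) ≤ om f (1 - s) :=
          om_mono hf_anti _ _ hinv0 hs1 hsle
        rw [om_eval n hn1] at h2f
        have hfn : 0 < f n := hf_pos n hnR
        have hr : ω.1 (mtc.symm b) ≤ ω.1 a := hamax _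
        have hsqrt : 0 ≤ Real.sqrt (1 - s) := Real.sqrt_nonneg _
        rw [gg_one, gg]
        linarith
    -- Step B: the measure of G is large
    haveI hP : IsProbabilityMeasure (marketMeasure n) := by
      unfold marketMeasure; infer_instance
    set A : Set ((Fin n → ℝ) × (Fin n → ℝ) × (Fin n → Fin n → ℝ) × (Fin n → Fin n → ℝ)) :=
      {ω | ∀ b, ω.2.1 b < σ} with hA
    set Bs : Set ((Fin n → ℝ) × (Fin n → ℝ) × (Fin n → Fin n → ℝ) × (Fin n → Fin n → ℝ)) :=
      {ω | ∃ b m, ω.2.2.2 b m ∉ Set.Icc 0 t} with hBs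
    have hGc : Gᶜ ⊆ A ∪ Bs := by
      intro ω hω
      rw [Set.mem_compl_iff, hG, Set.mem_setOf_eq] at hω
      by_cases h : ∃ b, σ ≤ ω.2.1 b
      · right
        have hq : ¬∀ b m, ω.2.2.2 b m ∈ Set.Icc 0 t := fun hq => hω ⟨h, hq⟩
        push_neg at hq
        exact hq
      · left
        push_neg at h
        exact h
    have hmA : marketMeasure n A = ENNReal.ofReal σ ^ n := by
      have hAeq : A = Set.univ ×ˢ ((Set.univ.pi fun _ : Fin n => Set.Iio σ) ×ˢ Set.univ) := by
        ext ω
        simp only [hA, Set.mem_setOf_eq, Set.mem_prod, Set.mem_univ, true_and, and_true,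
          Set.mem_pi, Set.mem_Iio, forall_true_left]
      have huI : unif (Set.Iio σ) = ENNReal.ofReal σ := by
        rw [unif_apply _ measurableSet_Iio]
        have hset : Set.Iio σ ∩ Set.Icc 0 1 = Set.Ico 0 σ := by
          ext x
          simp only [Set.mem_inter_iff, Set.mem_Iio, Set.mem_Icc, Set.mem_Ico]
          constructor
          · rintro ⟨h1, h2, _⟩; exact ⟨h2, h1⟩
          · rintro ⟨h1, h2⟩; exact ⟨h2, h1, by linarith⟩
        rw [hset, Real.volume_Ico, sub_zero]
      rw [marketMeasure, hAeq, Measure.prod_prod, Measure.prod_prod, Measure.pi_pi]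
      simp only [measure_univ, one_mul, mul_one, huI, Finset.prod_const, Finset.card_univ,
        Fintype.card_fin]
    have hcyl : ∀ b m : Fin n, marketMeasure n {ω | ω.2.2.2 b m ∉ Set.Icc 0 t} =
        ENNReal.ofReal (((n:ℝ)^3)⁻¹) := by
      intro b m
      have he : {ω : (Fin n → ℝ) × (Fin n → ℝ) × (Fin n → Fin n → ℝ) × (Fin n → Fin n → ℝ) |
          ω.2.2.2 b m ∉ Set.Icc 0 t} =
          Set.univ ×ˢ (Set.univ ×ˢ (Set.univ ×ˢ
            {S : Fin n → Fin n → ℝ | S b ∈ {g : Fin n → ℝ | g m ∈ (Set.Icc 0 t)ᶜ}})) := by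
        ext ω
        simp only [Set.mem_setOf_eq, Set.mem_prod, Set.mem_univ, true_and, Set.mem_compl_iff]
      rw [marketMeasure, he, Measure.prod_prod, Measure.prod_prod, Measure.prod_prod,
        pi_eval_measure, pi_eval_measure]
      simp only [measure_univ, one_mul]
      rw [unif_apply _ measurableSet_Icc.compl]
      have hset : (Set.Icc 0 t)ᶜ ∩ Set.Icc 0 1 = Set.Ioc t 1 := by
        ext x
        simp only [Set.mem_inter_iff, Set.mem_compl_iff, Set.mem_Icc, Set.mem_Ioc, not_and,
          not_le]
        constructor
        · rintro ⟨h1, h2, h3⟩; exact ⟨h1 h2, h3⟩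
        · rintro ⟨h1, h2⟩; exact ⟨fun _ => h1, by linarith, h2⟩
      rw [hset, Real.volume_Ioc]
      congr 1
      rw [ht]; ring
    have hmB : marketMeasure n Bs ≤
        (n : ENNReal) * ((n : ENNReal) * ENNReal.ofReal (((n:ℝ)^3)⁻¹)) := by
      have hBsub : Bs ⊆ ⋃ b : Fin n, ⋃ m : Fin n, {ω | ω.2.2.2 b m ∉ Set.Icc 0 t} := by
        rintro ω ⟨b, m, h⟩
        exact Set.mem_iUnion.2 ⟨b, Set.mem_iUnion.2 ⟨m, h⟩⟩
      calc marketMeasure n Bs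
          ≤ ∑' b : Fin n, ∑' m : Fin n, marketMeasure n {ω | ω.2.2.2 b m ∉ Set.Icc 0 t} :=
            le_trans (measure_mono hBsub)
              (le_trans (measure_iUnion_le _) (ENNReal.tsum_le_tsum fun b =>
                measure_iUnion_le _))
        _ = (n : ENNReal) * ((n : ENNReal) * ENNReal.ofReal (((n:ℝ)^3)⁻¹)) := by
            simp only [hcyl, tsum_fintype, Finset.sum_const, Finset.card_univ,
              Fintype.card_fin, nsmul_eq_mul]
    have hGm : marketMeasure n Gᶜ ≤ ENNReal.ofReal (σ^n + (n:ℝ)⁻¹) := by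
      have step1 : marketMeasure n Gᶜ ≤ marketMeasure n A + marketMeasure n Bs :=
        le_trans (measure_mono hGc) (measure_union_le _ _)
      have step2 : marketMeasure n A = ENNReal.ofReal (σ^n) := by
        rw [hmA, ← ENNReal.ofReal_pow hσ0.le]
      have step3 : (n : ENNReal) * ((n : ENNReal) * ENNReal.ofReal (((n:ℝ)^3)⁻¹)) =
          ENNReal.ofReal ((n:ℝ)⁻¹) := by
        rw [← ENNReal.ofReal_natCast n, ← ENNReal.ofReal_mul (by positivity),
          ← ENNReal.ofReal_mul (by positivity)]
        congr 1
        field_simp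
      rw [ENNReal.ofReal_add (by positivity) (by positivity)]
      exact le_trans step1
        (add_le_add (le_of_eq step2) (le_trans hmB (le_of_eq step3)))
    have hεn : σ^n + (n:ℝ)⁻¹ ≤ δ := by
      have hp1 : σ^n ≤ σ^N₁ :=
        pow_le_pow_of_le_one hσ0.le hσ1.le
          (le_trans (le_trans (le_max_left _ _) (le_max_left _ _)) hn)
      have hceil : (⌈(2/δ)⌉₊ : ℕ) ≤ n :=
        le_trans (le_trans (le_max_right _ _) (le_max_left _ _)) hn
      have h2d : 2/δ ≤ (n:ℝ) := by
        have := Nat.ceil_le.1 hceil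
        exact this
      have h2d0 : (0:ℝ) < 2/δ := by positivity
      have hinv : (n:ℝ)⁻¹ ≤ (2/δ)⁻¹ := inv_anti₀ h2d0 h2d
      have : (2/δ)⁻¹ = δ/2 := by
        rw [inv_div]
      linarith
    have hsplit : (1:ENNReal) ≤ marketMeasure n G + marketMeasure n Gᶜ := by
      have h := measure_union_le (μ := marketMeasure n) G Gᶜ
      rw [Set.union_compl_self, measure_univ] at h
      exact h
    have hfin : marketMeasure n Gᶜ ≠ ⊤ := measure_ne_top _ _
    have hkey : ENNReal.ofReal (1 - δ) + marketMeasure n Gᶜ ≤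
        marketMeasure n G + marketMeasure n Gᶜ := by
      calc ENNReal.ofReal (1 - δ) + marketMeasure n Gᶜ
          ≤ ENNReal.ofReal (1 - δ) + ENNReal.ofReal (σ^n + (n:ℝ)⁻¹) :=
            add_le_add_right hGm _
        _ = ENNReal.ofReal (1 - δ + (σ^n + (n:ℝ)⁻¹)) :=
            (ENNReal.ofReal_add (by linarith) (by positivity)).symm
        _ ≤ ENNReal.ofReal 1 := ENNReal.ofReal_le_ofReal (by linarith)
        _ = 1 := ENNReal.ofReal_one
        _ ≤ marketMeasure n G + marketMeasure n Gᶜ := hsplit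
    have hfinal : ENNReal.ofReal (1 - δ) ≤ marketMeasure n G :=
      (ENNReal.add_le_add_iff_right hfin).1 hkey
    exact le_trans hfinal (measure_mono hsub)

end
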